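/- Define u_0(λ) = 1, v_0(λ) = min(2, λ), and for 1 ≤ i ≤ r: u_i(λ) = 1 + min(u_{i−1}(λ), v_{i−1}(λ)) and v_i(λ) = 1 − 1/2^i + max(u_{i−1}(λ), v_{i−1}(λ)). Then for every i ∈ {1,…,r} and every k ∈ {0,…,2^{i−1}−1}: for λ ∈ [4k/2^i, (4k+2)/2^i] one has u_i(λ) = i + λ − 2k/2^i and v_i(λ) = i + (2k+1)/2^i; and for λ ∈ [(4k+2)/2^i, (4k+4)/2^i] one has u_i(λ) = i + (2k+2)/2^i and v_i(λ) = i + λ − (2k+1)/2^i. -/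
import Mathlib

private lemma staircase_key (u v : ℕ → ℝ → ℝ)
    (hu0 : ∀ l : ℝ, u 0 l = 1) (hv0 : ∀ l : ℝ, v 0 l = min 2 l)
    (hu : ∀ (i : ℕ) (l : ℝ), u (i + 1) l = 1 + min (u i l) (v i l))
    (hv : ∀ (i : ℕ) (l : ℝ), v (i + 1) l = 1 - 1 / 2 ^ (i + 1) + max (u i l) (v i l)) :
    ∀ j : ℕ, ∀ k : ℕ, k < 2 ^ j →
      (∀ l : ℝ, 4 * (k : ℝ) / 2 ^ (j + 1) ≤ l → l ≤ (4 * (k : ℝ) + 2) / 2 ^ (j + 1) →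
        u (j + 1) l = ((j + 1 : ℕ) : ℝ) + l - 2 * (k : ℝ) / 2 ^ (j + 1) ∧
        v (j + 1) l = ((j + 1 : ℕ) : ℝ) + (2 * (k : ℝ) + 1) / 2 ^ (j + 1)) ∧
      (∀ l : ℝ, (4 * (k : ℝ) + 2) / 2 ^ (j + 1) ≤ l → l ≤ (4 * (k : ℝ) + 4) / 2 ^ (j + 1) →
        u (j + 1) l = ((j + 1 : ℕ) : ℝ) + (2 * (k : ℝ) + 2) / 2 ^ (j + 1) ∧
        v (j + 1) l = ((j + 1 : ℕ) : ℝ) + l - (2 * (k : ℝ) + 1) / 2 ^ (j + 1)) := by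
  intro j
  induction j with
  | zero =>
    intro k hk
    have hk0 : k = 0 := by simpa using hk
    subst hk0
    constructor
    · intro l h1 h2
      norm_num at h1 h2
      have hm2 : min 2 l = l := min_eq_right (by linarith)
      rw [hu 0 l, hv 0 l, hu0, hv0, hm2, min_eq_right h2, max_eq_left h2]
      constructor
      · push_cast; norm_num
      · push_cast; norm_num
    · intro l h1 h2
      norm_num at h1 h2
      have hm2 : min 2 l = l := min_eq_right h2
      rw [hu 0 l, hv 0 l, hu0, hv0, hm2, min_eq_left h1, max_eq_right h1]
      constructor
      · push_cast; norm_num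
      · push_cast; norm_num; ring
  | succ j ih =>
    intro k hk
    have hA : (0:ℝ) < 2 ^ (j + 1) := by positivity
    have hps : (2:ℕ) ^ (j + 1) = 2 * 2 ^ j := by rw [pow_succ]; ring
    have hpow : (2:ℝ) ^ (j + 1 + 1) = 2 * 2 ^ (j + 1) := by ring
    rcases Nat.even_or_odd k with ⟨m, hm⟩ | ⟨m, hm⟩
    · -- k even
      have hm' : k = 2 * m := by omega
      subst hm'
      have hkm : m < 2 ^ j := by omega
      obtain ⟨ihA, ihB⟩ := ih m hkm
      constructor
      · intro l h1 h2
        rw [hpow] at h1 h2 ⊢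
        have H1 : 4 * ((2 * m : ℕ) : ℝ) ≤ l * (2 * 2 ^ (j + 1)) :=
          (div_le_iff₀ (by positivity)).mp h1
        have H2 : l * (2 * 2 ^ (j + 1)) ≤ 4 * ((2 * m : ℕ) : ℝ) + 2 :=
          (le_div_iff₀ (by positivity)).mp h2
        push_cast at H1 H2
        have hb1 : 4 * (m : ℝ) / 2 ^ (j + 1) ≤ l := by
          rw [div_le_iff₀ hA]; nlinarith
        have hb2 : l ≤ (4 * (m : ℝ) + 2) / 2 ^ (j + 1) := by
          rw [le_div_iff₀ hA]; nlinarith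
        obtain ⟨e1, e2⟩ := ihA l hb1 hb2
        have hcmp : u (j + 1) l ≤ v (j + 1) l := by
          rw [e1, e2]
          have h4 : l ≤ (4 * (m : ℝ) + 1) / 2 ^ (j + 1) := by
            rw [le_div_iff₀ hA]; nlinarith
          have hs : (4 * (m : ℝ) + 1) / 2 ^ (j + 1)
              = 2 * (m : ℝ) / 2 ^ (j + 1) + (2 * (m : ℝ) + 1) / 2 ^ (j + 1) := by ring
          rw [hs] at h4; linarith
        rw [hu (j + 1) l, hv (j + 1) l, min_eq_left hcmp, max_eq_right hcmp, e1, e2, hpow]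
        constructor
        · push_cast; field_simp; ring
        · push_cast; field_simp; ring
      · intro l h1 h2
        rw [hpow] at h1 h2 ⊢
        have H1 : 4 * ((2 * m : ℕ) : ℝ) + 2 ≤ l * (2 * 2 ^ (j + 1)) :=
          (div_le_iff₀ (by positivity)).mp h1
        have H2 : l * (2 * 2 ^ (j + 1)) ≤ 4 * ((2 * m : ℕ) : ℝ) + 4 :=
          (le_div_iff₀ (by positivity)).mp h2
        push_cast at H1 H2
        have hb1 : 4 * (m : ℝ) / 2 ^ (j + 1) ≤ l := by
          rw [div_le_iff₀ hA]; nlinarith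
        have hb2 : l ≤ (4 * (m : ℝ) + 2) / 2 ^ (j + 1) := by
          rw [le_div_iff₀ hA]; nlinarith
        obtain ⟨e1, e2⟩ := ihA l hb1 hb2
        have hcmp : v (j + 1) l ≤ u (j + 1) l := by
          rw [e1, e2]
          have h4 : (4 * (m : ℝ) + 1) / 2 ^ (j + 1) ≤ l := by
            rw [div_le_iff₀ hA]; nlinarith
          have hs : (4 * (m : ℝ) + 1) / 2 ^ (j + 1)
              = 2 * (m : ℝ) / 2 ^ (j + 1) + (2 * (m : ℝ) + 1) / 2 ^ (j + 1) := by ring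
          rw [hs] at h4; linarith
        rw [hu (j + 1) l, hv (j + 1) l, min_eq_right hcmp, max_eq_left hcmp, e1, e2, hpow]
        constructor
        · push_cast; field_simp; ring
        · push_cast; field_simp; ring
    · -- k odd
      have hm' : k = 2 * m + 1 := hm
      subst hm'
      have hkm : m < 2 ^ j := by omega
      obtain ⟨ihA, ihB⟩ := ih m hkm
      constructor
      · intro l h1 h2
        rw [hpow] at h1 h2 ⊢
        have H1 : 4 * ((2 * m + 1 : ℕ) : ℝ) ≤ l * (2 * 2 ^ (j + 1)) :=
          (div_le_iff₀ (by positivity)).mp h1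
        have H2 : l * (2 * 2 ^ (j + 1)) ≤ 4 * ((2 * m + 1 : ℕ) : ℝ) + 2 :=
          (le_div_iff₀ (by positivity)).mp h2
        push_cast at H1 H2
        have hb1 : (4 * (m : ℝ) + 2) / 2 ^ (j + 1) ≤ l := by
          rw [div_le_iff₀ hA]; nlinarith
        have hb2 : l ≤ (4 * (m : ℝ) + 4) / 2 ^ (j + 1) := by
          rw [le_div_iff₀ hA]; nlinarith
        obtain ⟨e1, e2⟩ := ihB l hb1 hb2
        have hcmp : v (j + 1) l ≤ u (j + 1) l := by
          rw [e1, e2]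
          have h4 : l ≤ (4 * (m : ℝ) + 3) / 2 ^ (j + 1) := by
            rw [le_div_iff₀ hA]; nlinarith
          have hs : (4 * (m : ℝ) + 3) / 2 ^ (j + 1)
              = (2 * (m : ℝ) + 1) / 2 ^ (j + 1) + (2 * (m : ℝ) + 2) / 2 ^ (j + 1) := by ring
          rw [hs] at h4; linarith
        rw [hu (j + 1) l, hv (j + 1) l, min_eq_right hcmp, max_eq_left hcmp, e1, e2, hpow]
        constructor
        · push_cast; field_simp; ring
        · push_cast; field_simp; ring
      · intro l h1 h2
        rw [hpow] at h1 h2 ⊢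
        have H1 : 4 * ((2 * m + 1 : ℕ) : ℝ) + 2 ≤ l * (2 * 2 ^ (j + 1)) :=
          (div_le_iff₀ (by positivity)).mp h1
        have H2 : l * (2 * 2 ^ (j + 1)) ≤ 4 * ((2 * m + 1 : ℕ) : ℝ) + 4 :=
          (le_div_iff₀ (by positivity)).mp h2
        push_cast at H1 H2
        have hb1 : (4 * (m : ℝ) + 2) / 2 ^ (j + 1) ≤ l := by
          rw [div_le_iff₀ hA]; nlinarith
        have hb2 : l ≤ (4 * (m : ℝ) + 4) / 2 ^ (j + 1) := by
          rw [le_div_iff₀ hA]; nlinarith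
        obtain ⟨e1, e2⟩ := ihB l hb1 hb2
        have hcmp : u (j + 1) l ≤ v (j + 1) l := by
          rw [e1, e2]
          have h4 : (4 * (m : ℝ) + 3) / 2 ^ (j + 1) ≤ l := by
            rw [div_le_iff₀ hA]; nlinarith
          have hs : (4 * (m : ℝ) + 3) / 2 ^ (j + 1)
              = (2 * (m : ℝ) + 1) / 2 ^ (j + 1) + (2 * (m : ℝ) + 2) / 2 ^ (j + 1) := by ring
          rw [hs] at h4; linarith
        rw [hu (j + 1) l, hv (j + 1) l, min_eq_left hcmp, max_eq_right hcmp, e1, e2, hpow]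
        constructor
        · push_cast; field_simp; ring
        · push_cast; field_simp; ring

/-- The staircase formula for the tropical central path dynamics
`u_0(λ) = 1`, `v_0(λ) = min(2,λ)`, `(u_i, v_i) = G_i(u_{i-1}, v_{i-1})` with
`G_i(a,b) = (1 + min(a,b), 1 - 1/2^i + max(a,b))`. -/
theorem staircase_formula (r : ℕ) (hr : 1 ≤ r) (u v : ℕ → ℝ → ℝ)
    (hu0 : ∀ l : ℝ, u 0 l = 1) (hv0 : ∀ l : ℝ, v 0 l = min 2 l)
    (hu : ∀ (i : ℕ) (l : ℝ), u (i + 1) l = 1 + min (u i l) (v i l))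
    (hv : ∀ (i : ℕ) (l : ℝ), v (i + 1) l = 1 - 1 / 2 ^ (i + 1) + max (u i l) (v i l)) :
    ∀ i : ℕ, 1 ≤ i → i ≤ r → ∀ k : ℕ, k ≤ 2 ^ (i - 1) - 1 →
      (∀ l : ℝ, 4 * (k : ℝ) / 2 ^ i ≤ l → l ≤ (4 * (k : ℝ) + 2) / 2 ^ i →
        u i l = (i : ℝ) + l - 2 * (k : ℝ) / 2 ^ i ∧
        v i l = (i : ℝ) + (2 * (k : ℝ) + 1) / 2 ^ i) ∧
      (∀ l : ℝ, (4 * (k : ℝ) + 2) / 2 ^ i ≤ l → l ≤ (4 * (k : ℝ) + 4) / 2 ^ i →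
        u i l = (i : ℝ) + (2 * (k : ℝ) + 2) / 2 ^ i ∧
        v i l = (i : ℝ) + l - (2 * (k : ℝ) + 1) / 2 ^ i) := by
  intro i hi1 _ k hk
  obtain ⟨j, rfl⟩ : ∃ j, i = j + 1 := ⟨i - 1, by omega⟩
  have h2j : 1 ≤ 2 ^ j := Nat.one_le_two_pow
  simp only [Nat.add_sub_cancel] at hk
  have hk' : k < 2 ^ j := by omega
  exact staircase_key u v hu0 hv0 hu hv j k hk'
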